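/- Let E ⊆ X₁ × ... × X_k be measurable in a graded probability space and suppose each X_t is partitioned into countably many measurable sets (A_{t,i})_{i∈ℕ}. Then the following are equivalent: (1) for every t and i, A_{t,i} is perfect for E viewed as a binary relation between X_t and the product of the remaining coordinates; (2) for every (i₁,...,i_k) ∈ ℕ^k with μ(A_{1,i₁} × ... × A_{k,i_k}) > 0, the density μ(E ∩ (A_{1,i₁} × ... × A_{k,i_k})) / μ(A_{1,i₁} × ... × A_{k,i_k}) is 0 or 1. -/

import Mathlib

open Set MeasureTheory
open scoped ENNReal

section aux
variable {k : ℕ} {X : Fin k → Type*} [∀ t, MeasurableSpace (X t)]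
  (μ : ∀ t, Measure (X t)) [∀ t, IsProbabilityMeasure (μ t)]

theorem ppzod_map_update (t : Fin k) :
    Measure.map (fun p : (∀ s, X s) × X t => Function.update p.1 t p.2)
      ((Measure.pi μ).prod (μ t)) = Measure.pi μ := by
  refine (Measure.pi_eq fun A hA => ?_).symm
  rw [Measure.map_apply measurable_update' (MeasurableSet.univ_pi hA)]
  have hpre : (fun p : (∀ s, X s) × X t => Function.update p.1 t p.2) ⁻¹' (univ.pi A)
      = (univ.pi (Function.update A t univ)) ×ˢ (A t) := by
    ext p
    simp only [mem_preimage, mem_pi, mem_univ, forall_true_left, mem_prod]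
    constructor
    · intro h
      refine ⟨fun s => ?_, by simpa using h t⟩
      by_cases hs : s = t
      · subst hs; simp
      · simpa [Function.update_of_ne hs] using h s
    · rintro ⟨h1, h2⟩ s
      by_cases hs : s = t
      · subst hs; simpa using h2
      · simpa [Function.update_of_ne hs] using h1 s
  rw [hpre, Measure.prod_prod, Measure.pi_pi]
  rw [Finset.prod_eq_mul_prod_sdiff_singleton_of_mem (Finset.mem_univ t)
    (fun i => μ i (Function.update A t univ i))]
  rw [Finset.prod_eq_mul_prod_sdiff_singleton_of_mem (Finset.mem_univ t) (fun i => μ i (A i))]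
  have : ∀ i ∈ Finset.univ \ {t}, μ i (Function.update A t univ i) = μ i (A i) := by
    intro i hi
    have hne : i ≠ t := by simpa using (Finset.mem_sdiff.1 hi).2
    rw [Function.update_of_ne hne]
  rw [Finset.prod_congr rfl this]
  simp [mul_comm]

theorem ppzod_lintegral_update (t : Fin k) {f : (∀ s, X s) → ℝ≥0∞} (hf : Measurable f) :
    ∫⁻ b, f b ∂(Measure.pi μ)
      = ∫⁻ b, ∫⁻ x, f (Function.update b t x) ∂(μ t) ∂(Measure.pi μ) := by
  conv_lhs => rw [← ppzod_map_update μ t]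
  rw [lintegral_map hf measurable_update']
  exact lintegral_prod _ (hf.comp measurable_update').aemeasurable

theorem ppzod_meas (t : Fin k) {A' : Set (X t)} {D : Set (∀ s, X s)}
    (hA' : MeasurableSet A') (hD : MeasurableSet D) :
    Measurable fun b => μ t (A' ∩ {x | Function.update b t x ∈ D}) := by
  have : ∀ b, μ t (A' ∩ {x | Function.update b t x ∈ D})
      = ∫⁻ x, A'.indicator 1 x * D.indicator 1 (Function.update b t x) ∂(μ t) := by
    intro b
    have hfib : MeasurableSet {x | Function.update b t x ∈ D} :=
      (measurable_update b) hD
    rw [← lintegral_indicator_one (hA'.inter hfib)]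
    congr 1; funext x
    by_cases h1 : x ∈ A' <;> by_cases h2 : Function.update b t x ∈ D <;>
      simp [Set.indicator_apply, h1, h2]
  simp_rw [this]
  have hm : Measurable fun p : (∀ s, X s) × X t =>
      A'.indicator (1 : X t → ℝ≥0∞) p.2 * D.indicator 1 (Function.update p.1 t p.2) :=
    ((measurable_const.indicator hA').comp measurable_snd).mul
      ((measurable_const.indicator hD).comp measurable_update')
  exact hm.lintegral_prod_right'
end aux

section aux2
variable {k : ℕ} {X : Fin k → Type*} [∀ t, MeasurableSpace (X t)]
  (μ : ∀ t, Measure (X t)) [∀ t, IsProbabilityMeasure (μ t)]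

theorem ppzod_L (t : Fin k) {A' : Set (X t)} {D W : Set (∀ s, X s)}
    (hA' : MeasurableSet A') (hD : MeasurableSet D) (hW : MeasurableSet W)
    (hWinv : ∀ b x, Function.update b t x ∈ W ↔ b ∈ W) :
    Measure.pi μ (D ∩ {b | b t ∈ A'} ∩ W)
      = ∫⁻ b in W, μ t (A' ∩ {x | Function.update b t x ∈ D}) ∂(Measure.pi μ) := by
  have hS : MeasurableSet (D ∩ {b | b t ∈ A'} ∩ W) :=
    (hD.inter ((measurable_pi_apply t) hA')).inter hW
  rw [← lintegral_indicator_one hS, ppzod_lintegral_update μ t (measurable_one.indicator hS),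
    ← lintegral_indicator hW]
  congr 1; funext b
  by_cases hbW : b ∈ W
  · have h1 : ∀ x, (D ∩ {b | b t ∈ A'} ∩ W).indicator (1 : ((s : Fin k) → X s) → ℝ≥0∞) (Function.update b t x)
        = (A' ∩ {x | Function.update b t x ∈ D}).indicator (1 : X t → ℝ≥0∞) x := by
      intro x
      by_cases hd : Function.update b t x ∈ D <;> by_cases ha : x ∈ A' <;>
        simp [Set.indicator_apply, hd, ha, hbW, hWinv, Function.update_self]
    have hfib : MeasurableSet {x | Function.update b t x ∈ D} := (measurable_update b) hD
    rw [lintegral_congr h1, lintegral_indicator_one (hA'.inter hfib),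
      Set.indicator_of_mem hbW]
  · have h1 : ∀ x, (D ∩ {b | b t ∈ A'} ∩ W).indicator (1 : ((s : Fin k) → X s) → ℝ≥0∞) (Function.update b t x)
        = 0 := by
      intro x
      have : Function.update b t x ∉ W := fun h => hbW ((hWinv b x).1 h)
      simp [Set.indicator_apply, this]
    rw [lintegral_congr h1, lintegral_zero, Set.indicator_of_notMem hbW]
end aux2

section aux3
variable {k : ℕ} {X : Fin k → Type*} [∀ t, MeasurableSpace (X t)]
  (μ : ∀ t, Measure (X t)) [∀ t, IsProbabilityMeasure (μ t)]

theorem ppzod_Wmeas (t : Fin k) {B : ∀ s, Set (X s)} (hB : ∀ s, MeasurableSet (B s)) :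
    MeasurableSet (univ.pi (Function.update B t univ)) := by
  apply MeasurableSet.univ_pi; intro s
  by_cases h : s = t
  · subst h; simp
  · rw [Function.update_of_ne h]; exact hB s

theorem ppzod_Winv (t : Fin k) (B : ∀ s, Set (X s)) (b : ∀ s, X s) (x : X t) :
    Function.update b t x ∈ univ.pi (Function.update B t univ)
      ↔ b ∈ univ.pi (Function.update B t univ) := by
  simp only [mem_pi, mem_univ, forall_true_left]
  apply forall_congr'
  intro s
  by_cases hs : s = t
  · subst hs; simp
  · rw [Function.update_of_ne hs, Function.update_of_ne hs]

theorem ppzod_boxeq (t : Fin k) (B : ∀ s, Set (X s)) :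
    {b : ∀ s, X s | b t ∈ B t} ∩ univ.pi (Function.update B t univ) = univ.pi B := by
  ext b
  simp only [mem_inter_iff, mem_setOf_eq, mem_pi, mem_univ, forall_true_left]
  constructor
  · rintro ⟨h1, h2⟩ s
    by_cases hs : s = t
    · subst hs; exact h1
    · have := h2 s; rwa [Function.update_of_ne hs] at this
  · intro h
    refine ⟨h t, fun s => ?_⟩
    by_cases hs : s = t
    · subst hs; simp
    · rw [Function.update_of_ne hs]; exact h s

theorem ppzod_boxmeasure (t : Fin k) (B : ∀ s, Set (X s)) :
    Measure.pi μ (univ.pi B)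
      = μ t (B t) * Measure.pi μ (univ.pi (Function.update B t univ)) := by
  rw [Measure.pi_pi, Measure.pi_pi]
  rw [Finset.prod_eq_mul_prod_sdiff_singleton_of_mem (Finset.mem_univ t) (fun i => μ i (B i)),
    Finset.prod_eq_mul_prod_sdiff_singleton_of_mem (Finset.mem_univ t)
      (fun i => μ i (Function.update B t univ i))]
  have h : ∀ i ∈ Finset.univ \ {t}, μ i (Function.update B t univ i) = μ i (B i) := by
    intro i hi
    have hne : i ≠ t := by simpa using (Finset.mem_sdiff.1 hi).2
    rw [Function.update_of_ne hne]
  rw [Finset.prod_congr rfl h]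
  simp [Function.update_self, measure_univ]
end aux3

set_option maxHeartbeats 1000000 in
/-- Perfection of each part of countable partitions of the coordinates is equivalent to
0-1 densities on all positive-measure boxes. -/
theorem perfect_partitions_iff_zero_one_densities
    {k : ℕ} (hk : 1 ≤ k) {X : Fin k → Type*} [∀ t, MeasurableSpace (X t)]
    (μ : ∀ t, Measure (X t)) [∀ t, IsProbabilityMeasure (μ t)]
    (E : Set (∀ t, X t)) (hE : MeasurableSet E)
    (A : (t : Fin k) → ℕ → Set (X t))
    (hmeas : ∀ t i, MeasurableSet (A t i))
    (hdisj : ∀ t, Pairwise (Function.onFun Disjoint (A t)))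
    (hcover : ∀ t, (⋃ i, A t i) = univ) :
    ((∀ (t : Fin k) (i : ℕ),
        (Measure.pi μ) {b : ∀ s, X s |
          0 < μ t (A t i ∩ {x | Function.update b t x ∈ E}) ∧
          0 < μ t (A t i \ {x | Function.update b t x ∈ E})} = 0) ↔
      (∀ idx : Fin k → ℕ,
        0 < (Measure.pi μ) (univ.pi fun t => A t (idx t)) →
        (Measure.pi μ) (E ∩ univ.pi fun t => A t (idx t)) /
            (Measure.pi μ) (univ.pi fun t => A t (idx t)) ∈ ({0, 1} : Set ℝ≥0∞))) := by
  constructor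
  · -- (1) → (2)
    intro h1 idx hpos
    set Box : Set (∀ s, X s) := univ.pi fun s => A s (idx s) with hBoxdef
    have hBoxmeas : MeasurableSet Box := MeasurableSet.univ_pi fun s => hmeas s _
    have claim : ∀ m : ℕ, m ≤ k → ∃ D : Set (∀ s, X s), MeasurableSet D ∧
        (∀ t : Fin k, (t : ℕ) < m → ∀ (b : ∀ s, X s) (x : X t),
          Function.update b t x ∈ D ↔ b ∈ D) ∧
        Measure.pi μ ((D ∩ Box) \ E) = 0 ∧ Measure.pi μ ((E ∩ Box) \ D) = 0 := by
      intro m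
      induction m with
      | zero =>
        intro _
        have hempty : (E ∩ Box) \ E = ∅ := by
          ext b; simp only [mem_diff, mem_inter_iff, mem_empty_iff_false]; tauto
        exact ⟨E, hE, fun t ht => absurd ht (by omega),
          by rw [hempty, measure_empty], by rw [hempty, measure_empty]⟩
      | succ m ih =>
        intro hm1
        obtain ⟨D, hDmeas, hDinv, hDE1, hDE2⟩ := ih (Nat.le_of_succ_le hm1)
        have hmk : m < k := Nat.lt_of_succ_le hm1
        set t : Fin k := ⟨m, hmk⟩ with ht_def
        have hAi : MeasurableSet (A t (idx t)) := hmeas t (idx t)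
        set W : Set (∀ s, X s) :=
          univ.pi (Function.update (fun s => A s (idx s)) t univ) with hWdef
        have hWmeas : MeasurableSet W := ppzod_Wmeas t (fun s => hmeas s (idx s))
        have hWinv : ∀ (b : ∀ s, X s) (x : X t),
            Function.update b t x ∈ W ↔ b ∈ W := ppzod_Winv t (fun s => A s (idx s))
        have hboxeq : {b : ∀ s, X s | b t ∈ A t (idx t)} ∩ W = Box :=
          ppzod_boxeq t (fun s => A s (idx s))
        set gD : (∀ s, X s) → ℝ≥0∞ :=
          fun b => μ t (A t (idx t) ∩ {x | Function.update b t x ∈ D}) with hgDdef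
        have hgDmeas : Measurable gD := ppzod_meas μ t hAi hDmeas
        set D' : Set (∀ s, X s) := {b | 0 < gD b} with hD'def
        have hD'meas : MeasurableSet D' := measurableSet_lt measurable_const hgDmeas
        have hgDupd : ∀ (b : ∀ s, X s) (x : X t), gD (Function.update b t x) = gD b := by
          intro b x
          simp only [hgDdef]
          congr 2
          ext y
          simp [Function.update_idem]
        have hD'inv_t : ∀ (b : ∀ s, X s) (x : X t),
            Function.update b t x ∈ D' ↔ b ∈ D' := by
          intro b x
          simp only [hD'def, mem_setOf_eq, hgDupd]
        have hD'inv : ∀ t' : Fin k, (t' : ℕ) < m + 1 → ∀ (b : ∀ s, X s) (x : X t'),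
            Function.update b t' x ∈ D' ↔ b ∈ D' := by
          intro t' ht' b x
          by_cases htt : t' = t
          · subst htt; exact hD'inv_t b x
          · have ht'm : (t' : ℕ) < m := by
              rcases Nat.lt_succ_iff_lt_or_eq.1 ht' with h | h
              · exact h
              · exact absurd (Fin.ext h : t' = t) htt
            simp only [hD'def, mem_setOf_eq]
            have heq : gD (Function.update b t' x) = gD b := by
              simp only [hgDdef]
              congr 2
              ext y
              simp only [mem_setOf_eq]
              rw [Function.update_comm htt]
              exact hDinv t' ht'm (Function.update b t y) x
            rw [heq]
        -- a.e. facts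
        have hsplit1 : (D \ E) ∩ {b : ∀ s, X s | b t ∈ A t (idx t)} ∩ W = (D ∩ Box) \ E := by
          rw [Set.inter_assoc, hboxeq]
          ext b; simp only [mem_inter_iff, mem_diff]; tauto
        have hL1 := ppzod_L μ t hAi (hDmeas.diff hE) hWmeas hWinv
        rw [hsplit1, hDE1] at hL1
        have hg1 := ppzod_meas μ t hAi (hDmeas.diff hE)
        have ae1 : ∀ᵐ b ∂(Measure.pi μ), b ∈ W →
            μ t (A t (idx t) ∩ {x | Function.update b t x ∈ D \ E}) = 0 := by
          have h' := (lintegral_eq_zero_iff hg1).1 hL1.symm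
          have h'' := (ae_restrict_iff' hWmeas).1 h'
          filter_upwards [h''] with b hb hbW
          simpa using hb hbW
        have hsplit2 : (E \ D) ∩ {b : ∀ s, X s | b t ∈ A t (idx t)} ∩ W = (E ∩ Box) \ D := by
          rw [Set.inter_assoc, hboxeq]
          ext b; simp only [mem_inter_iff, mem_diff]; tauto
        have hL2 := ppzod_L μ t hAi (hE.diff hDmeas) hWmeas hWinv
        rw [hsplit2, hDE2] at hL2
        have hg2 := ppzod_meas μ t hAi (hE.diff hDmeas)
        have ae2 : ∀ᵐ b ∂(Measure.pi μ), b ∈ W →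
            μ t (A t (idx t) ∩ {x | Function.update b t x ∈ E \ D}) = 0 := by
          have h' := (lintegral_eq_zero_iff hg2).1 hL2.symm
          have h'' := (ae_restrict_iff' hWmeas).1 h'
          filter_upwards [h''] with b hb hbW
          simpa using hb hbW
        have aeP : ∀ᵐ b ∂(Measure.pi μ),
            ¬(0 < μ t (A t (idx t) ∩ {x | Function.update b t x ∈ E}) ∧
              0 < μ t (A t (idx t) \ {x | Function.update b t x ∈ E})) := by
          rw [ae_iff]
          simpa [not_not, pos_iff_ne_zero, ne_eq] using h1 t (idx t)
        refine ⟨D', hD'meas, hD'inv, ?_, ?_⟩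
        · -- μ ((D' ∩ Box) \ E) = 0
          have hsplit : (D' ∩ Box) \ E
              = Eᶜ ∩ {b : ∀ s, X s | b t ∈ A t (idx t)} ∩ (W ∩ D') := by
            rw [← hboxeq]
            ext b
            simp only [mem_inter_iff, mem_diff, mem_compl_iff, mem_setOf_eq]
            tauto
          have hWD'inv : ∀ (b : ∀ s, X s) (x : X t),
              Function.update b t x ∈ W ∩ D' ↔ b ∈ W ∩ D' := by
            intro b x
            simp only [mem_inter_iff, hWinv, hD'inv_t]
          have hL := ppzod_L μ t hAi hE.compl (hWmeas.inter hD'meas) hWD'inv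
          rw [hsplit, hL]
          have hgE := ppzod_meas μ t hAi hE.compl
          rw [lintegral_eq_zero_iff hgE]
          refine (ae_restrict_iff' (hWmeas.inter hD'meas)).2 ?_
          filter_upwards [ae1, aeP] with b h1b hPb hbWD
          have hbW : b ∈ W := hbWD.1
          have hbD' : 0 < gD b := hbWD.2
          have hgE_pos : 0 < μ t (A t (idx t) ∩ {x | Function.update b t x ∈ E}) := by
            have hsub : A t (idx t) ∩ {x | Function.update b t x ∈ D}
                ⊆ (A t (idx t) ∩ {x | Function.update b t x ∈ E})
                  ∪ (A t (idx t) ∩ {x | Function.update b t x ∈ D \ E}) := by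
              intro y hy
              by_cases hyE : Function.update b t y ∈ E
              · exact Or.inl ⟨hy.1, hyE⟩
              · exact Or.inr ⟨hy.1, hy.2, hyE⟩
            have hle := (measure_mono hsub).trans (measure_union_le (μ := μ t) _ _)
            rw [h1b hbW, add_zero] at hle
            exact lt_of_lt_of_le hbD' hle
          have hz : μ t (A t (idx t) \ {x | Function.update b t x ∈ E}) = 0 := by
            by_contra hne
            exact hPb ⟨hgE_pos, pos_iff_ne_zero.2 hne⟩
          exact hz
        · -- μ ((E ∩ Box) \ D') = 0
          have hsplit : (E ∩ Box) \ D'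
              = E ∩ {b : ∀ s, X s | b t ∈ A t (idx t)} ∩ (W ∩ D'ᶜ) := by
            rw [← hboxeq]
            ext b
            simp only [mem_inter_iff, mem_diff, mem_compl_iff, mem_setOf_eq]
            tauto
          have hWD'inv : ∀ (b : ∀ s, X s) (x : X t),
              Function.update b t x ∈ W ∩ D'ᶜ ↔ b ∈ W ∩ D'ᶜ := by
            intro b x
            simp only [mem_inter_iff, mem_compl_iff, hWinv, hD'inv_t]
          have hL := ppzod_L μ t hAi hE (hWmeas.inter hD'meas.compl) hWD'inv
          rw [hsplit, hL]
          have hgE := ppzod_meas μ t hAi hE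
          rw [lintegral_eq_zero_iff hgE]
          refine (ae_restrict_iff' (hWmeas.inter hD'meas.compl)).2 ?_
          filter_upwards [ae2] with b h2b hbWD
          have hbW : b ∈ W := hbWD.1
          have hbD'c : gD b = 0 := by
            by_contra hne
            exact hbWD.2 (pos_iff_ne_zero.2 hne)
          have hsub : A t (idx t) ∩ {x | Function.update b t x ∈ E}
              ⊆ (A t (idx t) ∩ {x | Function.update b t x ∈ D})
                ∪ (A t (idx t) ∩ {x | Function.update b t x ∈ E \ D}) := by
            intro y hy
            by_cases hyD : Function.update b t y ∈ D
            · exact Or.inl ⟨hy.1, hyD⟩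
            · exact Or.inr ⟨hy.1, hy.2, hyD⟩
          have hle := (measure_mono hsub).trans (measure_union_le (μ := μ t) _ _)
          rw [h2b hbW, add_zero] at hle
          have : μ t (A t (idx t) ∩ {x | Function.update b t x ∈ E}) = 0 :=
            le_antisymm (hbD'c ▸ hle) (zero_le)
          simpa using this
    obtain ⟨D, hDmeas, hDinv, hDE1, hDE2⟩ := claim k le_rfl
    have Qfull : ∀ b b' : ∀ s, X s, b ∈ D ↔ b' ∈ D := by
      have Q : ∀ m : ℕ, m ≤ k → ∀ b b' : ∀ s, X s,
          (∀ t : Fin k, m ≤ (t : ℕ) → b t = b' t) → (b ∈ D ↔ b' ∈ D) := by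
        intro m
        induction m with
        | zero =>
          intro _ b b' hbb
          rw [funext fun t => hbb t (Nat.zero_le _)]
        | succ m ih =>
          intro hm1 b b' hbb
          have hmk : m < k := Nat.lt_of_succ_le hm1
          set t : Fin k := ⟨m, hmk⟩ with ht_def
          have h1' : b ∈ D ↔ Function.update b t (b' t) ∈ D :=
            (hDinv t t.isLt b (b' t)).symm
          have h2' : Function.update b t (b' t) ∈ D ↔ b' ∈ D := by
            apply ih (Nat.le_of_succ_le hm1)
            intro t' ht'
            by_cases htt : t' = t
            · subst htt; simp
            · have hne : (t' : ℕ) ≠ m := fun h => htt (Fin.ext h)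
              rw [Function.update_of_ne htt]
              exact hbb t' (by omega)
          rw [h1', h2']
      intro b b'
      exact Q k le_rfl b b' (fun t ht => absurd ht (not_le.2 t.isLt))
    have htriv : D = ∅ ∨ D = univ := by
      rcases Classical.em (∃ b, b ∈ D) with ⟨b0, hb0⟩ | hno
      · right; exact eq_univ_of_forall fun b' => (Qfull b0 b').1 hb0
      · left; exact eq_empty_iff_forall_notMem.2 fun b hb => hno ⟨b, hb⟩
    rcases htriv with hD | hD
    · subst hD
      have hE0 : Measure.pi μ (E ∩ Box) = 0 := by simpa using hDE2
      rw [hE0, ENNReal.zero_div]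
      exact mem_insert _ _
    · subst hD
      have hB0 : Measure.pi μ (Box \ E) = 0 := by simpa using hDE1
      have hEB : Measure.pi μ (E ∩ Box) = Measure.pi μ Box := by
        apply le_antisymm (measure_mono inter_subset_right)
        calc Measure.pi μ Box ≤ Measure.pi μ ((E ∩ Box) ∪ (Box \ E)) := by
              apply measure_mono
              intro b hb
              by_cases hbE : b ∈ E
              · exact Or.inl ⟨hbE, hb⟩
              · exact Or.inr ⟨hb, hbE⟩
          _ ≤ Measure.pi μ (E ∩ Box) + Measure.pi μ (Box \ E) := measure_union_le _ _
          _ = Measure.pi μ (E ∩ Box) := by rw [hB0, add_zero]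
      rw [hEB, ENNReal.div_self hpos.ne' (measure_ne_top _ _)]
      exact mem_insert_of_mem _ rfl
  · -- (2) → (1)
    intro h2 t i
    have hAi : MeasurableSet (A t i) := hmeas t i
    set Bad : Set (∀ s, X s) := {b : ∀ s, X s |
        0 < μ t (A t i ∩ {x | Function.update b t x ∈ E}) ∧
        0 < μ t (A t i \ {x | Function.update b t x ∈ E})} with hBad
    have key : ∀ idx : Fin k → ℕ,
        Measure.pi μ (Bad ∩ univ.pi fun s => A s (idx s)) = 0 := by
      intro idx
      by_cases hA0 : μ t (A t i) = 0
      · have hempty : Bad ∩ (univ.pi fun s => A s (idx s)) = ∅ := by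
          apply eq_empty_iff_forall_notMem.2
          intro b hb
          have h1b : 0 < μ t (A t i ∩ {x | Function.update b t x ∈ E}) := hb.1.1
          have : μ t (A t i ∩ {x | Function.update b t x ∈ E}) ≤ μ t (A t i) :=
            measure_mono inter_subset_left
          rw [hA0] at this
          exact absurd (le_antisymm this (zero_le)) h1b.ne'
        rw [hempty, measure_empty]
      · set W : Set (∀ s, X s) :=
          univ.pi (Function.update (fun s => A s (idx s)) t univ) with hWdef
        have hWmeas : MeasurableSet W := ppzod_Wmeas t (fun s => hmeas s (idx s))
        have hWinv := ppzod_Winv t (fun s => A s (idx s))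
        set B : ∀ s, Set (X s) := fun s => A s (Function.update idx t i s) with hBdef
        have hBt : B t = A t i := by rw [hBdef]; simp [Function.update_self]
        have hWW : Function.update B t univ = Function.update (fun s => A s (idx s)) t univ := by
          funext s
          by_cases hs : s = t
          · subst hs; simp
          · rw [Function.update_of_ne hs, Function.update_of_ne hs, hBdef]
            simp only []
            rw [Function.update_of_ne hs]
        have hboxB : {b : ∀ s, X s | b t ∈ A t i} ∩ W = univ.pi B := by
          have := ppzod_boxeq t B
          rw [hWW, ← hWdef, hBt] at this
          exact this
        have hBoxsubW : (univ.pi fun s => A s (idx s)) ⊆ W := by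
          intro b hb
          rw [hWdef]
          intro s _
          by_cases hs : s = t
          · subst hs; simp
          · rw [Function.update_of_ne hs]; exact hb s (mem_univ s)
        by_cases hB0 : Measure.pi μ (univ.pi B) = 0
        · have hprod := ppzod_boxmeasure μ t B
          rw [hWW, ← hWdef] at hprod
          rw [hprod] at hB0
          rcases mul_eq_zero.1 hB0 with h | h
          · rw [hBt] at h; exact absurd h hA0
          · exact measure_mono_null (fun b hb => hBoxsubW hb.2) h
        · have hpos : 0 < Measure.pi μ (univ.pi B) := pos_iff_ne_zero.2 hB0
          have hfin : Measure.pi μ (univ.pi B) ≠ ⊤ := measure_ne_top _ _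
          have hmem := h2 (Function.update idx t i) hpos
          simp only [mem_insert_iff, mem_singleton_iff] at hmem
          rcases hmem with h0 | h1
          · -- density zero
            have hE0 : Measure.pi μ (E ∩ univ.pi B) = 0 := by
              rcases ENNReal.div_eq_zero_iff.1 h0 with h | h
              · exact h
              · exact absurd h hfin
            have hsplit : E ∩ univ.pi B = E ∩ {b : ∀ s, X s | b t ∈ A t i} ∩ W := by
              rw [Set.inter_assoc, hboxB]
            have hL := ppzod_L μ t hAi hE hWmeas hWinv
            rw [← hsplit] at hL
            have hint : ∫⁻ b in W,
                μ t (A t i ∩ {x | Function.update b t x ∈ E}) ∂(Measure.pi μ) = 0 := by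
              rw [← hL]; exact hE0
            have hg := ppzod_meas μ t hAi hE
            have hae : ∀ᵐ b ∂(Measure.pi μ), b ∈ W →
                μ t (A t i ∩ {x | Function.update b t x ∈ E}) = 0 := by
              have h' := (lintegral_eq_zero_iff hg).1 hint
              have h'' := (ae_restrict_iff' hWmeas).1 h'
              filter_upwards [h''] with b hb hbW
              simpa using hb hbW
            refine measure_mono_null (fun b hb => ?_) (ae_iff.1 hae)
            simp only [mem_setOf_eq, Classical.not_imp]
            exact ⟨hBoxsubW hb.2, hb.1.1.ne'⟩
          · -- density one
            have hE1 : Measure.pi μ (E ∩ univ.pi B) = Measure.pi μ (univ.pi B) :=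
              (ENNReal.div_eq_one_iff hB0 hfin).1 h1
            have hdiffnull : Measure.pi μ (univ.pi B \ E) = 0 := by
              have hBoxmeas : MeasurableSet (univ.pi B) :=
                MeasurableSet.univ_pi fun s => hmeas s _
              have : Measure.pi μ (univ.pi B \ (E ∩ univ.pi B))
                  = Measure.pi μ (univ.pi B) - Measure.pi μ (E ∩ univ.pi B) :=
                measure_diff inter_subset_right ((hE.inter hBoxmeas).nullMeasurableSet)
                  (by rw [hE1]; exact hfin)
              rw [Set.diff_inter_self_eq_diff] at this
              rw [this, hE1, tsub_self]
            have hsplit : univ.pi B \ E = Eᶜ ∩ {b : ∀ s, X s | b t ∈ A t i} ∩ W := by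
              rw [Set.inter_assoc, hboxB, Set.diff_eq_compl_inter]
            have hL := ppzod_L μ t hAi hE.compl hWmeas hWinv
            rw [← hsplit] at hL
            have hfib : ∀ b : ∀ s, X s, A t i ∩ {x | Function.update b t x ∈ Eᶜ}
                = A t i \ {x | Function.update b t x ∈ E} := fun b => rfl
            have hint : ∫⁻ b in W,
                μ t (A t i \ {x | Function.update b t x ∈ E}) ∂(Measure.pi μ) = 0 := by
              simp_rw [← hfib]
              rw [← hL]; exact hdiffnull
            have hg : Measurable fun b : ∀ s, X s =>
                μ t (A t i \ {x | Function.update b t x ∈ E}) := by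
              simp_rw [← hfib]
              exact ppzod_meas μ t hAi hE.compl
            have hae : ∀ᵐ b ∂(Measure.pi μ), b ∈ W →
                μ t (A t i \ {x | Function.update b t x ∈ E}) = 0 := by
              have h' := (lintegral_eq_zero_iff hg).1 hint
              have h'' := (ae_restrict_iff' hWmeas).1 h'
              filter_upwards [h''] with b hb hbW
              simpa using hb hbW
            refine measure_mono_null (fun b hb => ?_) (ae_iff.1 hae)
            simp only [mem_setOf_eq, Classical.not_imp]
            exact ⟨hBoxsubW hb.2, hb.1.2.ne'⟩
    have hcov : Bad ⊆ ⋃ idx : Fin k → ℕ, Bad ∩ univ.pi fun s => A s (idx s) := by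
      intro b hb
      have hex : ∀ s, ∃ j, b s ∈ A s j := by
        intro s
        have : b s ∈ ⋃ j, A s j := by rw [hcover s]; exact mem_univ _
        exact mem_iUnion.1 this
      choose idx hidx using hex
      exact mem_iUnion.2 ⟨idx, hb, fun s _ => hidx s⟩
    exact measure_mono_null hcov (measure_iUnion_null key)
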